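/- Let t = (t_1, …, t_m) ∈ [0,1]^m, α, β ∈ (0,1), and let Q and Q' be the empirical functionals built from t. Then sup{u ∈ [0,1] : Q(u) ≤ α} = t^l and inf{u ∈ [0,1] : Q'(u) ≤ β} = t^u, where t^l and t^u are the adaptive lower and upper cutoffs: t^l = t^{(r+1)} if r := r(t, α) < m and t^l = 1 if r = m; t^u = t^{(m−a)} if a := a(t, β) < m and t^u = 0 if a = m. -/

import Mathlib

open MeasureTheory Filter

/-- Order statistics of a finite tuple: the `i`-th smallest value (0-indexed). -/
noncomputable def ordStat {m : ℕ} (t : Fin m → ℝ) : Fin m → ℝ :=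
  t ∘ Tuple.sort t

/-- Cumulative average of the `q` smallest values, `(1/q) * ∑_{l=1}^q t^{(l)}`. -/
noncomputable def cumAvgLow {m : ℕ} (t : Fin m → ℝ) (q : ℕ) : ℝ :=
  (∑ i : Fin m, if (i : ℕ) < q then ordStat t i else 0) / q

/-- Cumulative average of `1 - (value)` over the `q` largest values,
`(1/q) * ∑_{l=1}^q (1 - t^{(m-l+1)})`. -/
noncomputable def cumAvgHigh {m : ℕ} (t : Fin m → ℝ) (q : ℕ) : ℝ :=
  (∑ i : Fin m, if m - q ≤ (i : ℕ) then 1 - ordStat t i else 0) / q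

/-- `r(t, α) = max {q ∈ {1,…,m} : (1/q) ∑_{l=1}^q t^{(l)} ≤ α}`, `0` if no such `q`. -/
noncomputable def rIdx {m : ℕ} (t : Fin m → ℝ) (α : ℝ) : ℕ :=
  sSup {q : ℕ | 1 ≤ q ∧ q ≤ m ∧ cumAvgLow t q ≤ α}

/-- `a(t, β) = max {q ∈ {1,…,m} : (1/q) ∑_{l=1}^q (1 - t^{(m-l+1)}) ≤ β}`, `0` if no such `q`. -/
noncomputable def aIdx {m : ℕ} (t : Fin m → ℝ) (β : ℝ) : ℕ :=
  sSup {q : ℕ | 1 ≤ q ∧ q ≤ m ∧ cumAvgHigh t q ≤ β}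

/-- Adaptive lower cutoff `t^l`: `t^{(r+1)}` if `r < m`, and `1` if `r = m`. -/
noncomputable def lowerCut {m : ℕ} (t : Fin m → ℝ) (α : ℝ) : ℝ :=
  if h : rIdx t α < m then ordStat t ⟨rIdx t α, h⟩ else 1

/-- Adaptive upper cutoff `t^u`: `t^{(m-a)}` if `a < m`, and `0` if `a = m`. -/
noncomputable def upperCut {m : ℕ} (t : Fin m → ℝ) (β : ℝ) : ℝ :=
  if h : aIdx t β < m then ordStat t ⟨m - 1 - aIdx t β, by omega⟩ else 0

/-- The `k`-th order statistic with 1-based index `k` (junk value `1` out of range). -/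
noncomputable def ordStatN {m : ℕ} (t : Fin m → ℝ) (k : ℕ) : ℝ :=
  if h : k - 1 < m then ordStat t ⟨k - 1, h⟩ else 1

/-- Empirical running-average functional `Q(u)` (equal to `0` below `t^{(1)}`,
using the convention `0/0 = 0`). -/
noncomputable def Qlow {m : ℕ} (t : Fin m → ℝ) (u : ℝ) : ℝ :=
  (∑ j : Fin m, if t j ≤ u then t j else 0) / (∑ j : Fin m, if t j ≤ u then (1:ℝ) else 0)

/-- Empirical running-average functional `Q'(u)` (equal to `0` above `t^{(m)}`,
using the convention `0/0 = 0`). -/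
noncomputable def Qhigh {m : ℕ} (t : Fin m → ℝ) (u : ℝ) : ℝ :=
  (∑ j : Fin m, if u ≤ t j then 1 - t j else 0) / (∑ j : Fin m, if u ≤ t j then (1:ℝ) else 0)

private lemma ordStat_mono {m : ℕ} (t : Fin m → ℝ) : Monotone (ordStat t) :=
  Tuple.monotone_sort t

private lemma sum_comp_sort {m : ℕ} (t : Fin m → ℝ) (F : ℝ → ℝ) :
    (∑ j : Fin m, F (t j)) = ∑ i : Fin m, F (ordStat t i) :=
  (Equiv.sum_comp (Tuple.sort t) fun j => F (t j)).symm

private lemma sum_step {m : ℕ} (f : Fin m → ℝ) (q : ℕ) (h : q < m) :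
    (∑ i : Fin m, if (i : ℕ) < q + 1 then f i else 0)
      = (∑ i : Fin m, if (i : ℕ) < q then f i else 0) + f ⟨q, h⟩ := by
  have key : ∀ i : Fin m,
      (if (i : ℕ) < q + 1 then f i else 0)
        = (if (i : ℕ) < q then f i else 0) + (if i = ⟨q, h⟩ then f i else 0) := by
    intro i
    rcases eq_or_ne i ⟨q, h⟩ with rfl | hne
    · simp
    · have hq : (i : ℕ) ≠ q := fun hq => hne (Fin.ext hq)
      rw [if_neg hne, add_zero]
      clear hne
      split_ifs <;> first | rfl | (exfalso; omega)
  rw [Finset.sum_congr rfl (fun i _ => key i), Finset.sum_add_distrib,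
    Finset.sum_ite_eq' Finset.univ (⟨q, h⟩ : Fin m) f]
  simp

private lemma sum_stepH {m : ℕ} (f : Fin m → ℝ) (q : ℕ) (h : q < m) :
    (∑ i : Fin m, if m - (q + 1) ≤ (i : ℕ) then f i else 0)
      = (∑ i : Fin m, if m - q ≤ (i : ℕ) then f i else 0) + f ⟨m - 1 - q, by omega⟩ := by
  have key : ∀ i : Fin m,
      (if m - (q + 1) ≤ (i : ℕ) then f i else 0)
        = (if m - q ≤ (i : ℕ) then f i else 0)
          + (if i = (⟨m - 1 - q, by omega⟩ : Fin m) then f i else 0) := by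
    intro i
    have hi := i.isLt
    rcases eq_or_ne (i : ℕ) (m - 1 - q) with heq | hq
    · have hic : i = (⟨m - 1 - q, by omega⟩ : Fin m) := Fin.ext heq
      rw [if_pos (by omega), if_neg (by omega), if_pos hic, zero_add]
    · have hne : i ≠ (⟨m - 1 - q, by omega⟩ : Fin m) := fun h' => hq (by rw [h'])
      rw [if_neg hne, add_zero]
      clear hne
      split_ifs <;> first | rfl | (exfalso; omega)
  rw [Finset.sum_congr rfl (fun i _ => key i), Finset.sum_add_distrib,
    Finset.sum_ite_eq' Finset.univ (⟨m - 1 - q, by omega⟩ : Fin m) f]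
  simp

private lemma sum_ind_lt {m : ℕ} (q : ℕ) (hq : q ≤ m) :
    (∑ i : Fin m, if (i : ℕ) < q then (1:ℝ) else 0) = q := by
  induction q with
  | zero => simp
  | succ n ih =>
      rw [sum_step (fun _ => (1:ℝ)) n (by omega), ih (by omega)]
      push_cast; ring

private lemma sum_ind_ge {m : ℕ} (q : ℕ) (hq : q ≤ m) :
    (∑ i : Fin m, if m - q ≤ (i : ℕ) then (1:ℝ) else 0) = q := by
  induction q with
  | zero =>
      rw [Finset.sum_eq_zero (fun i _ => by rw [if_neg (by omega)])]; simp
  | succ n ih =>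
      rw [sum_stepH (fun _ => (1:ℝ)) n (by omega), ih (by omega)]
      push_cast; ring

noncomputable def cnt {m : ℕ} (t : Fin m → ℝ) (u : ℝ) : ℕ :=
  (Finset.univ.filter (fun j => t j ≤ u)).card

noncomputable def cntH {m : ℕ} (t : Fin m → ℝ) (u : ℝ) : ℕ :=
  (Finset.univ.filter (fun j => u ≤ t j)).card


private lemma cnt_le {m : ℕ} (t : Fin m → ℝ) (u : ℝ) : cnt t u ≤ m := by
  simpa [cnt] using (Finset.card_filter_le Finset.univ (fun j => t j ≤ u)).trans_eq (by simp)

private lemma cntH_le {m : ℕ} (t : Fin m → ℝ) (u : ℝ) : cntH t u ≤ m := by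
  simpa [cntH] using (Finset.card_filter_le Finset.univ (fun j => u ≤ t j)).trans_eq (by simp)

private lemma cnt_eq {m : ℕ} (t : Fin m → ℝ) (u : ℝ) :
    cnt t u = (Finset.univ.filter (fun i => ordStat t i ≤ u)).card := by
  exact (Finset.card_equiv (Tuple.sort t)
    (fun i => by simp only [Finset.mem_filter, Finset.mem_univ, true_and]; rfl)).symm

private lemma cntH_eq {m : ℕ} (t : Fin m → ℝ) (u : ℝ) :
    cntH t u = (Finset.univ.filter (fun i => u ≤ ordStat t i)).card := by
  exact (Finset.card_equiv (Tuple.sort t)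
    (fun i => by simp only [Finset.mem_filter, Finset.mem_univ, true_and]; rfl)).symm

private lemma lt_cnt_iff {m : ℕ} (t : Fin m → ℝ) (u : ℝ) (k : Fin m) :
    (k : ℕ) < cnt t u ↔ ordStat t k ≤ u := by
  rw [cnt_eq]
  constructor
  · intro h
    by_contra hcon
    have hsub : (Finset.univ.filter (fun i => ordStat t i ≤ u)) ⊆ Finset.Iio k := by
      intro i hi
      simp only [Finset.mem_filter, Finset.mem_univ, true_and] at hi
      rw [Finset.mem_Iio]
      by_contra hik
      exact hcon (le_trans (ordStat_mono t (not_lt.mp hik)) hi)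
    have := (Finset.card_le_card hsub).trans_eq (Fin.card_Iio k)
    omega
  · intro h
    have hsub : Finset.Iic k ⊆ (Finset.univ.filter (fun i => ordStat t i ≤ u)) := by
      intro i hi
      simp only [Finset.mem_filter, Finset.mem_univ, true_and]
      exact le_trans (ordStat_mono t (Finset.mem_Iic.mp hi)) h
    have := (Fin.card_Iic k).symm.trans_le (Finset.card_le_card hsub)
    omega

private lemma cntH_le_iff {m : ℕ} (t : Fin m → ℝ) (u : ℝ) (k : Fin m) :
    m - cntH t u ≤ (k : ℕ) ↔ u ≤ ordStat t k := by
  have hk := k.isLt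
  have hle := cntH_le t u
  rw [cntH_eq] at *
  constructor
  · intro h
    have hne : ∃ i ∈ (Finset.univ.filter (fun i => u ≤ ordStat t i)), i ≤ k := by
      by_contra hcon
      push_neg at hcon
      have hsub : (Finset.univ.filter (fun i => u ≤ ordStat t i)) ⊆ Finset.Ioi k := by
        intro i hi
        exact Finset.mem_Ioi.mpr (hcon i hi)
      have := (Finset.card_le_card hsub).trans_eq (Fin.card_Ioi k)
      omega
    obtain ⟨i, hi, hik⟩ := hne
    simp only [Finset.mem_filter, Finset.mem_univ, true_and] at hi
    exact le_trans hi (ordStat_mono t hik)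
  · intro h
    have hsub : Finset.Ici k ⊆ (Finset.univ.filter (fun i => u ≤ ordStat t i)) := by
      intro i hi
      simp only [Finset.mem_filter, Finset.mem_univ, true_and]
      exact le_trans h (ordStat_mono t (Finset.mem_Ici.mp hi))
    have := (Fin.card_Ici k).symm.trans_le (Finset.card_le_card hsub)
    omega

private lemma sum_boole_cnt {m : ℕ} (t : Fin m → ℝ) (u : ℝ) :
    (∑ j : Fin m, if t j ≤ u then (1:ℝ) else 0) = cnt t u := by
  rw [cnt]
  exact Finset.sum_boole _ _

private lemma sum_boole_cntH {m : ℕ} (t : Fin m → ℝ) (u : ℝ) :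
    (∑ j : Fin m, if u ≤ t j then (1:ℝ) else 0) = cntH t u := by
  rw [cntH]
  exact Finset.sum_boole _ _

private lemma Qlow_eq {m : ℕ} (t : Fin m → ℝ) (u : ℝ) :
    Qlow t u = cumAvgLow t (cnt t u) := by
  rw [Qlow, cumAvgLow, sum_boole_cnt]
  congr 1
  rw [sum_comp_sort t (fun x => if x ≤ u then x else 0)]
  exact Finset.sum_congr rfl (fun i _ => (if_congr (lt_cnt_iff t u i) rfl rfl).symm)

private lemma Qhigh_eq {m : ℕ} (t : Fin m → ℝ) (u : ℝ) :
    Qhigh t u = cumAvgHigh t (cntH t u) := by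
  rw [Qhigh, cumAvgHigh, sum_boole_cntH]
  congr 1
  rw [sum_comp_sort t (fun x => if u ≤ x then 1 - x else 0)]
  exact Finset.sum_congr rfl (fun i _ => (if_congr (cntH_le_iff t u i) rfl rfl).symm)

private lemma cumAvgLow_zero {m : ℕ} (t : Fin m → ℝ) : cumAvgLow t 0 = 0 := by
  simp [cumAvgLow]

private lemma cumAvgHigh_zero {m : ℕ} (t : Fin m → ℝ) : cumAvgHigh t 0 = 0 := by
  rw [cumAvgHigh, Finset.sum_eq_zero (fun i _ => by rw [if_neg (by omega)])]
  simp

private lemma cumAvgLow_le_succ {m : ℕ} (t : Fin m → ℝ) (ht0 : ∀ i, 0 ≤ t i)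
    (q : ℕ) (hq : q < m) : cumAvgLow t q ≤ cumAvgLow t (q + 1) := by
  have hs0 : ∀ i, 0 ≤ ordStat t i := fun i => ht0 _
  set c := ordStat t ⟨q, hq⟩ with hc
  set S := ∑ i : Fin m, if (i : ℕ) < q then ordStat t i else 0 with hS
  have hstep : cumAvgLow t (q + 1) = (S + c) / (q + 1) := by
    rw [cumAvgLow, sum_step (fun i => ordStat t i) q hq]
    push_cast; rw [hS, hc]
  have hSnn : 0 ≤ S := Finset.sum_nonneg (fun i _ => by split_ifs; exacts [hs0 i, le_refl 0])
  have hSc : S ≤ q * c := by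
    have : S ≤ ∑ i : Fin m, if (i : ℕ) < q then c else 0 := by
      refine Finset.sum_le_sum (fun i _ => ?_)
      split_ifs with h
      · exact ordStat_mono t (show i ≤ ⟨q, hq⟩ from le_of_lt h)
      · exact le_refl 0
    calc S ≤ ∑ i : Fin m, if (i : ℕ) < q then c else 0 := this
      _ = (∑ i : Fin m, if (i : ℕ) < q then (1:ℝ) else 0) * c := by
          rw [Finset.sum_mul]
          exact Finset.sum_congr rfl (fun i _ => by split_ifs <;> ring)
      _ = q * c := by rw [sum_ind_lt q (le_of_lt hq)]
  have hcnn : 0 ≤ c := hs0 _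
  rcases Nat.eq_zero_or_pos q with rfl | hqpos
  · have hS0 : S = 0 := le_antisymm (by simpa using hSc) hSnn
    rw [cumAvgLow_zero, hstep, hS0]
    norm_num
    linarith
  · rw [cumAvgLow, ← hS, hstep]
    rw [div_le_div_iff₀ (by positivity) (by positivity)]
    push_cast
    nlinarith

private lemma cumAvgHigh_le_succ {m : ℕ} (t : Fin m → ℝ) (ht1 : ∀ i, t i ≤ 1)
    (q : ℕ) (hq : q < m) : cumAvgHigh t q ≤ cumAvgHigh t (q + 1) := by
  have hs1 : ∀ i, ordStat t i ≤ 1 := fun i => ht1 _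
  set c := 1 - ordStat t ⟨m - 1 - q, by omega⟩ with hc
  set S := ∑ i : Fin m, if m - q ≤ (i : ℕ) then 1 - ordStat t i else 0 with hS
  have hstep : cumAvgHigh t (q + 1) = (S + c) / (q + 1) := by
    rw [cumAvgHigh, sum_stepH (fun i => 1 - ordStat t i) q hq]
    push_cast; rw [hS, hc]
  have hSnn : 0 ≤ S := Finset.sum_nonneg (fun i _ => by
    split_ifs
    · linarith [hs1 i]
    · exact le_refl 0)
  have hSc : S ≤ q * c := by
    have hterm : S ≤ ∑ i : Fin m, if m - q ≤ (i : ℕ) then c else 0 := by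
      refine Finset.sum_le_sum (fun i _ => ?_)
      split_ifs with h
      · have : ordStat t ⟨m - 1 - q, by omega⟩ ≤ ordStat t i :=
          ordStat_mono t (show (⟨m - 1 - q, by omega⟩ : Fin m) ≤ i by
            simp only [Fin.mk_le_mk, Fin.le_def]; omega)
        linarith
      · exact le_refl 0
    calc S ≤ ∑ i : Fin m, if m - q ≤ (i : ℕ) then c else 0 := hterm
      _ = (∑ i : Fin m, if m - q ≤ (i : ℕ) then (1:ℝ) else 0) * c := by
          rw [Finset.sum_mul]
          exact Finset.sum_congr rfl (fun i _ => by split_ifs <;> ring)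
      _ = q * c := by rw [sum_ind_ge q (le_of_lt hq)]
  have hcnn : 0 ≤ c := by rw [hc]; linarith [hs1 ⟨m - 1 - q, by omega⟩]
  rcases Nat.eq_zero_or_pos q with rfl | hqpos
  · have hS0 : S = 0 := le_antisymm (by simpa using hSc) hSnn
    rw [cumAvgHigh_zero, hstep, hS0]
    norm_num
    linarith
  · rw [cumAvgHigh, ← hS, hstep]
    rw [div_le_div_iff₀ (by positivity) (by positivity)]
    nlinarith

private lemma cumAvgLow_mono {m : ℕ} (t : Fin m → ℝ) (ht0 : ∀ i, 0 ≤ t i)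
    (q q' : ℕ) (h : q ≤ q') (h' : q' ≤ m) : cumAvgLow t q ≤ cumAvgLow t q' := by
  induction q' with
  | zero => have : q = 0 := by omega
            rw [this]
  | succ n ih =>
      rcases Nat.lt_or_ge q (n + 1) with hlt | hge
      · exact le_trans (ih (by omega) (by omega)) (cumAvgLow_le_succ t ht0 n (by omega))
      · have : q = n + 1 := by omega
        rw [this]

private lemma cumAvgHigh_mono {m : ℕ} (t : Fin m → ℝ) (ht1 : ∀ i, t i ≤ 1)
    (q q' : ℕ) (h : q ≤ q') (h' : q' ≤ m) : cumAvgHigh t q ≤ cumAvgHigh t q' := by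
  induction q' with
  | zero => have : q = 0 := by omega
            rw [this]
  | succ n ih =>
      rcases Nat.lt_or_ge q (n + 1) with hlt | hge
      · exact le_trans (ih (by omega) (by omega)) (cumAvgHigh_le_succ t ht1 n (by omega))
      · have : q = n + 1 := by omega
        rw [this]

private lemma bddA {m : ℕ} (t : Fin m → ℝ) (α : ℝ) :
    BddAbove {q : ℕ | 1 ≤ q ∧ q ≤ m ∧ cumAvgLow t q ≤ α} := ⟨m, fun _ hq => hq.2.1⟩

private lemma bddB {m : ℕ} (t : Fin m → ℝ) (β : ℝ) :
    BddAbove {q : ℕ | 1 ≤ q ∧ q ≤ m ∧ cumAvgHigh t q ≤ β} := ⟨m, fun _ hq => hq.2.1⟩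

private lemma rIdx_le {m : ℕ} (t : Fin m → ℝ) (α : ℝ) : rIdx t α ≤ m := by
  rw [rIdx]
  rcases Set.eq_empty_or_nonempty {q : ℕ | 1 ≤ q ∧ q ≤ m ∧ cumAvgLow t q ≤ α} with h | h
  · rw [h, csSup_empty]; exact Nat.zero_le m
  · exact csSup_le h (fun q hq => hq.2.1)

private lemma aIdx_le {m : ℕ} (t : Fin m → ℝ) (β : ℝ) : aIdx t β ≤ m := by
  rw [aIdx]
  rcases Set.eq_empty_or_nonempty {q : ℕ | 1 ≤ q ∧ q ≤ m ∧ cumAvgHigh t q ≤ β} with h | h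
  · rw [h, csSup_empty]; exact Nat.zero_le m
  · exact csSup_le h (fun q hq => hq.2.1)

private lemma le_rIdx_le {m : ℕ} (t : Fin m → ℝ) (ht0 : ∀ i, 0 ≤ t i) (α : ℝ)
    (hα0 : 0 ≤ α) (q : ℕ) (hq : q ≤ rIdx t α) : cumAvgLow t q ≤ α := by
  rcases Nat.eq_zero_or_pos q with rfl | hqpos
  · rw [cumAvgLow_zero]; exact hα0
  · have hrpos : 0 < rIdx t α := lt_of_lt_of_le hqpos hq
    have hne : {q : ℕ | 1 ≤ q ∧ q ≤ m ∧ cumAvgLow t q ≤ α}.Nonempty := by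
      by_contra h
      rw [Set.not_nonempty_iff_eq_empty] at h
      have : rIdx t α = 0 := by rw [rIdx, h, csSup_empty]; rfl
      omega
    have hmem := Nat.sSup_mem hne (bddA t α)
    exact le_trans (cumAvgLow_mono t ht0 q (rIdx t α) hq hmem.2.1) hmem.2.2

private lemma le_aIdx_le {m : ℕ} (t : Fin m → ℝ) (ht1 : ∀ i, t i ≤ 1) (β : ℝ)
    (hβ0 : 0 ≤ β) (q : ℕ) (hq : q ≤ aIdx t β) : cumAvgHigh t q ≤ β := by
  rcases Nat.eq_zero_or_pos q with rfl | hqpos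
  · rw [cumAvgHigh_zero]; exact hβ0
  · have hrpos : 0 < aIdx t β := lt_of_lt_of_le hqpos hq
    have hne : {q : ℕ | 1 ≤ q ∧ q ≤ m ∧ cumAvgHigh t q ≤ β}.Nonempty := by
      by_contra h
      rw [Set.not_nonempty_iff_eq_empty] at h
      have : aIdx t β = 0 := by rw [aIdx, h, csSup_empty]; rfl
      omega
    have hmem := Nat.sSup_mem hne (bddB t β)
    exact le_trans (cumAvgHigh_mono t ht1 q (aIdx t β) hq hmem.2.1) hmem.2.2

private lemma rIdx_lt_gt {m : ℕ} (t : Fin m → ℝ) (α : ℝ) (q : ℕ)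
    (h1 : rIdx t α < q) (h2 : q ≤ m) : α < cumAvgLow t q := by
  by_contra hcon
  push_neg at hcon
  have hmem : q ∈ {q : ℕ | 1 ≤ q ∧ q ≤ m ∧ cumAvgLow t q ≤ α} := ⟨by omega, h2, hcon⟩
  have : q ≤ rIdx t α := le_csSup (bddA t α) hmem
  omega

private lemma aIdx_lt_gt {m : ℕ} (t : Fin m → ℝ) (β : ℝ) (q : ℕ)
    (h1 : aIdx t β < q) (h2 : q ≤ m) : β < cumAvgHigh t q := by
  by_contra hcon
  push_neg at hcon
  have hmem : q ∈ {q : ℕ | 1 ≤ q ∧ q ≤ m ∧ cumAvgHigh t q ≤ β} := ⟨by omega, h2, hcon⟩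
  have : q ≤ aIdx t β := le_csSup (bddB t β) hmem
  omega

/-- **Identities (4.9) and (4.12).** The adaptive lower and upper cutoffs are the level
crossings of the empirical functionals: `sup{u ∈ [0,1] : Q(u) ≤ α} = t^l` and
`inf{u ∈ [0,1] : Q'(u) ≤ β} = t^u`. -/
theorem stmt_11 {m : ℕ} (t : Fin m → ℝ) (ht : ∀ i, t i ∈ Set.Icc (0:ℝ) 1)
    (α β : ℝ) (hα : α ∈ Set.Ioo (0:ℝ) 1) (hβ : β ∈ Set.Ioo (0:ℝ) 1) :
    sSup {u | u ∈ Set.Icc (0:ℝ) 1 ∧ Qlow t u ≤ α} = lowerCut t α ∧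
    sInf {u | u ∈ Set.Icc (0:ℝ) 1 ∧ Qhigh t u ≤ β} = upperCut t β := by
  have ht0 : ∀ i, 0 ≤ t i := fun i => (ht i).1
  have ht1 : ∀ i, t i ≤ 1 := fun i => (ht i).2
  have hs0 : ∀ i, 0 ≤ ordStat t i := fun i => ht0 _
  have hs1 : ∀ i, ordStat t i ≤ 1 := fun i => ht1 _
  constructor
  · -- sup part
    have hrm : rIdx t α ≤ m := rIdx_le t α
    have hmem : ∀ u : ℝ, u ∈ {u | u ∈ Set.Icc (0:ℝ) 1 ∧ Qlow t u ≤ α} ↔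
        0 ≤ u ∧ u ≤ 1 ∧ cnt t u ≤ rIdx t α := by
      intro u
      simp only [Set.mem_setOf_eq, Set.mem_Icc, and_assoc]
      refine and_congr_right fun h0 => and_congr_right fun h1 => ?_
      rw [Qlow_eq]
      constructor
      · intro h
        by_contra hcon
        exact absurd h (not_le.mpr (rIdx_lt_gt t α (cnt t u) (by omega) (cnt_le t u)))
      · intro h
        exact le_rIdx_le t ht0 α (le_of_lt hα.1) (cnt t u) h
    rcases lt_or_ge (rIdx t α) m with hlt | hge
    · have hcut : lowerCut t α = ordStat t ⟨rIdx t α, hlt⟩ := dif_pos hlt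
      set c := ordStat t ⟨rIdx t α, hlt⟩ with hcdef
      have hc0 : 0 ≤ c := hs0 _
      have hc1 : c ≤ 1 := hs1 _
      have hiff : ∀ u : ℝ, cnt t u ≤ rIdx t α ↔ u < c := by
        intro u
        constructor
        · intro h
          by_contra hcon
          push_neg at hcon
          have h2 : rIdx t α < cnt t u := (lt_cnt_iff t u ⟨rIdx t α, hlt⟩).mpr hcon
          omega
        · intro h
          by_contra hcon
          push_neg at hcon
          exact absurd ((lt_cnt_iff t u ⟨rIdx t α, hlt⟩).mp hcon) (not_le.mpr h)
      have hset : {u | u ∈ Set.Icc (0:ℝ) 1 ∧ Qlow t u ≤ α} = Set.Ico 0 c := by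
        ext u
        rw [hmem u, hiff u, Set.mem_Ico]
        constructor
        · rintro ⟨h0, _, h2⟩; exact ⟨h0, h2⟩
        · rintro ⟨h0, h2⟩; exact ⟨h0, le_trans (le_of_lt h2) hc1, h2⟩
      rw [hset, hcut]
      rcases eq_or_lt_of_le hc0 with heq | hpos
      · rw [← heq, Set.Ico_self, Real.sSup_empty]
      · exact csSup_Ico hpos
    · have hrm' : rIdx t α = m := le_antisymm hrm hge
      have hcut : lowerCut t α = 1 := dif_neg (by omega)
      have hset : {u | u ∈ Set.Icc (0:ℝ) 1 ∧ Qlow t u ≤ α} = Set.Icc 0 1 := by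
        ext u
        rw [hmem u, Set.mem_Icc]
        constructor
        · rintro ⟨h0, h1, _⟩; exact ⟨h0, h1⟩
        · rintro ⟨h0, h1⟩; exact ⟨h0, h1, by rw [hrm']; exact cnt_le t u⟩
      rw [hset, hcut, csSup_Icc zero_le_one]
  · -- inf part
    have ham : aIdx t β ≤ m := aIdx_le t β
    have hmem : ∀ u : ℝ, u ∈ {u | u ∈ Set.Icc (0:ℝ) 1 ∧ Qhigh t u ≤ β} ↔
        0 ≤ u ∧ u ≤ 1 ∧ cntH t u ≤ aIdx t β := by
      intro u
      simp only [Set.mem_setOf_eq, Set.mem_Icc, and_assoc]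
      refine and_congr_right fun h0 => and_congr_right fun h1 => ?_
      rw [Qhigh_eq]
      constructor
      · intro h
        by_contra hcon
        exact absurd h (not_le.mpr (aIdx_lt_gt t β (cntH t u) (by omega) (cntH_le t u)))
      · intro h
        exact le_aIdx_le t ht1 β (le_of_lt hβ.1) (cntH t u) h
    -- 1 is always in the set
    have h1mem : cntH t 1 ≤ aIdx t β := by
      rcases Nat.eq_zero_or_pos (cntH t 1) with h0 | hpos
      · omega
      · have hzero : cumAvgHigh t (cntH t 1) = 0 := by
          rw [cumAvgHigh, Finset.sum_eq_zero, zero_div]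
          intro i _
          split_ifs with h
          · have h1 : (1:ℝ) ≤ ordStat t i := (cntH_le_iff t 1 i).mp h
            linarith [hs1 i]
          · rfl
        have hmemB : cntH t 1 ∈ {q : ℕ | 1 ≤ q ∧ q ≤ m ∧ cumAvgHigh t q ≤ β} :=
          ⟨hpos, cntH_le t 1, by rw [hzero]; exact le_of_lt hβ.1⟩
        exact le_csSup (bddB t β) hmemB
    rcases lt_or_ge (aIdx t β) m with hlt | hge
    · have hcut : upperCut t β = ordStat t ⟨m - 1 - aIdx t β, by omega⟩ := dif_pos hlt
      set c := ordStat t (⟨m - 1 - aIdx t β, by omega⟩ : Fin m) with hcdef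
      have hc0 : 0 ≤ c := hs0 _
      have hiff : ∀ u : ℝ, cntH t u ≤ aIdx t β ↔ c < u := by
        intro u
        have hle := cntH_le t u
        constructor
        · intro h
          by_contra hcon
          push_neg at hcon
          have h2 : m - cntH t u ≤ m - 1 - aIdx t β :=
            (cntH_le_iff t u ⟨m - 1 - aIdx t β, by omega⟩).mpr hcon
          omega
        · intro h
          by_contra hcon
          push_neg at hcon
          have : m - cntH t u ≤ m - 1 - aIdx t β := by omega
          exact absurd ((cntH_le_iff t u ⟨m - 1 - aIdx t β, by omega⟩).mp this)
            (not_le.mpr h)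
      have hclt : c < 1 := (hiff 1).mp h1mem
      have hset : {u | u ∈ Set.Icc (0:ℝ) 1 ∧ Qhigh t u ≤ β} = Set.Ioc c 1 := by
        ext u
        rw [hmem u, hiff u, Set.mem_Ioc]
        constructor
        · rintro ⟨_, h1, h2⟩; exact ⟨h2, h1⟩
        · rintro ⟨h2, h1⟩; exact ⟨le_trans hc0 (le_of_lt h2), h1, h2⟩
      rw [hset, hcut]
      exact csInf_Ioc hclt
    · have ham' : aIdx t β = m := le_antisymm ham hge
      have hcut : upperCut t β = 0 := dif_neg (by omega)
      have hset : {u | u ∈ Set.Icc (0:ℝ) 1 ∧ Qhigh t u ≤ β} = Set.Icc 0 1 := by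
        ext u
        rw [hmem u, Set.mem_Icc]
        constructor
        · rintro ⟨h0, h1, _⟩; exact ⟨h0, h1⟩
        · rintro ⟨h0, h1⟩; exact ⟨h0, h1, by rw [ham']; exact cntH_le t u⟩
      rw [hset, hcut, csInf_Icc zero_le_one]
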